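/- Let 𝒜 be an equivariant twisted Cartan cohomology theory, X a G-simplicial set, τ : ΦX → π̲ an O_G-twisting function and φ a π̲-module structure on M = (Z⁰𝒜)₀. Then H⁰ of the cochain complex (A_φ*(X;τ), δ̄) equals the set of lifts of θ(τ) to Z⁰𝒜 ×_{τ(π̲)} W̄π̲, and in degree 0 two such lifts are vertically homotopic if and only if they are equal. -/

import Mathlib

universe u

/-- A combinatorial presentation of a simplicial set: a graded family of types
together with face operators `δ n i : obj (n+1) → obj n` and degeneracy operators
`σ n i : obj n → obj (n+1)` (defined for all `i : ℕ`; the simplicial identities are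
only required for indices in the valid range). -/
structure SData : Type (u+1) where
  obj : ℕ → Type u
  δ : (n : ℕ) → ℕ → obj (n+1) → obj n
  σ : (n : ℕ) → ℕ → obj n → obj (n+1)

namespace SData

/-- The simplicial identities. -/
structure IsSimplicial (X : SData.{u}) : Prop where
  δδ : ∀ (n i j : ℕ), i < j → j ≤ n + 2 → ∀ x : X.obj (n+2),
    X.δ n i (X.δ (n+1) j x) = X.δ n (j-1) (X.δ (n+1) i x)
  σσ : ∀ (n i j : ℕ), i ≤ j → j ≤ n → ∀ x : X.obj n,
    X.σ (n+1) i (X.σ n j x) = X.σ (n+1) (j+1) (X.σ n i x)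
  δσ_lt : ∀ (n i j : ℕ), i < j → j ≤ n + 1 → ∀ x : X.obj (n+1),
    X.δ (n+1) i (X.σ (n+1) j x) = X.σ n (j-1) (X.δ n i x)
  δσ_self : ∀ (n j : ℕ), j ≤ n → ∀ x : X.obj n, X.δ n j (X.σ n j x) = x
  δσ_succ : ∀ (n j : ℕ), j ≤ n → ∀ x : X.obj n, X.δ n (j+1) (X.σ n j x) = x
  δσ_gt : ∀ (n i j : ℕ), j + 1 < i → i ≤ n + 2 → ∀ x : X.obj (n+1),
    X.δ (n+1) i (X.σ (n+1) j x) = X.σ n j (X.δ n (i-1) x)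

/-- A simplex `x ∈ X_{n+1}` is degenerate if it is in the image of some degeneracy. -/
def Degenerate (X : SData.{u}) {n : ℕ} (x : X.obj (n+1)) : Prop :=
  ∃ i ≤ n, ∃ y : X.obj n, x = X.σ n i y

/-- Nondegeneracy (every `0`-simplex is nondegenerate). -/
def NonDeg (X : SData.{u}) : ∀ {n : ℕ}, X.obj n → Prop
  | 0, _ => True
  | _+1, x => ¬ X.Degenerate x

end SData

/-- A simplicial group structure: the underlying simplicial identities hold and all
face and degeneracy operators are group homomorphisms. -/
structure IsSGrp (Γ : SData.{u}) [∀ n, Group (Γ.obj n)] : Prop where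
  simp : Γ.IsSimplicial
  δ_mul : ∀ (n i : ℕ) (g h : Γ.obj (n+1)), Γ.δ n i (g * h) = Γ.δ n i g * Γ.δ n i h
  σ_mul : ∀ (n i : ℕ) (g h : Γ.obj n), Γ.σ n i (g * h) = Γ.σ n i g * Γ.σ n i h

/-- The Moore/Cartan twisting-function identities for a graded function
`τ : B_q → Γ_{q-1}` (here `τ q : B.obj (q+1) → Γ.obj q`). -/
structure IsTwisting (B Γ : SData.{u}) [∀ n, Group (Γ.obj n)]
    (τ : ∀ q, B.obj (q+1) → Γ.obj q) : Prop where
  d0 : ∀ (q : ℕ) (b : B.obj (q+2)),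
    Γ.δ q 0 (τ (q+1) b) = (τ q (B.δ (q+1) 0 b))⁻¹ * τ q (B.δ (q+1) 1 b)
  di : ∀ (q i : ℕ), 0 < i → i ≤ q + 1 → ∀ b : B.obj (q+2),
    Γ.δ q i (τ (q+1) b) = τ q (B.δ (q+1) (i+1) b)
  si : ∀ (q i : ℕ), i ≤ q → ∀ b : B.obj (q+1),
    Γ.σ q i (τ q b) = τ (q+1) (B.σ (q+1) (i+1) b)
  s0 : ∀ (q : ℕ) (b : B.obj q), τ q (B.σ q 0 b) = 1

/-- A group `π` regarded as a constant simplicial object. -/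
abbrev constS (π : Type u) : SData.{u} where
  obj _ := π
  δ _ _ x := x
  σ _ _ x := x

/-- A left simplicial action of a simplicial group `Γ` on `F`. -/
structure IsSimplicialAction (F Γ : SData.{u}) [∀ n, Group (Γ.obj n)]
    (act : ∀ n, Γ.obj n → F.obj n → F.obj n) : Prop where
  one_act : ∀ (n : ℕ) (f : F.obj n), act n 1 f = f
  mul_act : ∀ (n : ℕ) (g h : Γ.obj n) (f : F.obj n), act n (g * h) f = act n g (act n h f)
  act_δ : ∀ (n i : ℕ), i ≤ n + 1 → ∀ (g : Γ.obj (n+1)) (f : F.obj (n+1)),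
    F.δ n i (act (n+1) g f) = act n (Γ.δ n i g) (F.δ n i f)
  act_σ : ∀ (n i : ℕ), i ≤ n → ∀ (g : Γ.obj n) (f : F.obj n),
    F.σ n i (act n g f) = act (n+1) (Γ.σ n i g) (F.σ n i f)

/-- The twisted cartesian product `F ×_τ B`. -/
def TCP (F B Γ : SData.{u}) (act : ∀ n, Γ.obj n → F.obj n → F.obj n)
    (τ : ∀ q, B.obj (q+1) → Γ.obj q) : SData.{u} where
  obj n := F.obj n × B.obj n
  δ n i p :=
    if i = 0 then (act n (τ n p.2) (F.δ n 0 p.1), B.δ n 0 p.2)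
    else (F.δ n i p.1, B.δ n i p.2)
  σ n i p := (F.σ n i p.1, B.σ n i p.2)

/-- The classifying complex `W̄π` of a group `π`: `q`-simplices are `q`-tuples
`[x₁, …, x_q]` of elements of `π`. -/
def Wbar (π : Type u) [Group π] : SData.{u} where
  obj q := Fin q → π
  δ q i x := fun j =>
    if i = 0 then x j.succ
    else if (j : ℕ) + 1 < i then x j.castSucc
    else if (j : ℕ) + 1 = i then x j.castSucc * x j.succ
    else x j.succ
  σ q i x := fun j =>
    if h : (j : ℕ) < i ∧ (j : ℕ) < q then x ⟨j, h.2⟩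
    else if (j : ℕ) = i then 1
    else if h2 : 1 ≤ (j : ℕ) ∧ (j : ℕ) ≤ q then x ⟨(j : ℕ) - 1, by omega⟩
    else 1

/-- The canonical twisting function `τ(π) : W̄π → π`, `[x₁,…,x_q] ↦ x₁`. -/
def tauW (π : Type u) [Group π] : ∀ q, (Wbar π).obj (q+1) → π := fun _ x => x 0

/-- The simplicial map `θ(τ) : B → W̄π` associated to a twisting function `τ` with
values in a (constant) group `π`:
`θ(τ)(x) = [τ(x), τ(∂₀x), …, τ(∂₀^{q-1}x)]`. -/
def thetaF (B : SData.{u}) (π : Type u) [Group π] (τ : ∀ q, B.obj (q+1) → π) :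
    ∀ q, B.obj q → (Wbar π).obj q
  | 0, _ => Fin.elim0
  | q+1, x => Fin.cons (τ q x) (thetaF B π τ q (B.δ q 0 x))

/-- Compatibility of a family of candidate horn faces. -/
def HornCompatible (X : SData.{u}) (m k : ℕ) (y : ℕ → X.obj (m+1)) : Prop :=
  ∀ i j : ℕ, i < j → j ≤ m + 2 → i ≠ k → j ≠ k →
    X.δ m i (y j) = X.δ m (j-1) (y i)

/-- The Kan extension condition. -/
def IsKanComplex (X : SData.{u}) : Prop :=
  (∀ k ≤ 1, ∀ y : X.obj 0, ∃ x : X.obj 1, X.δ 0 (1 - k) x = y) ∧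
  (∀ (m k : ℕ), k ≤ m + 2 → ∀ y : ℕ → X.obj (m+1), HornCompatible X m k y →
    ∃ x : X.obj (m+2), ∀ i ≤ m + 2, i ≠ k → X.δ (m+1) i x = y i)

/-- The Kan fibration condition for a levelwise map `p : E → B`. -/
def IsKanFibration (E B : SData.{u}) (p : ∀ n, E.obj n → B.obj n) : Prop :=
  (∀ k ≤ 1, ∀ (y : E.obj 0) (b : B.obj 1), p 0 y = B.δ 0 (1 - k) b →
    ∃ x : E.obj 1, p 1 x = b ∧ E.δ 0 (1 - k) x = y) ∧
  (∀ (m k : ℕ), k ≤ m + 2 → ∀ (y : ℕ → E.obj (m+1)) (b : B.obj (m+2)),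
    HornCompatible E m k y → (∀ i ≤ m + 2, i ≠ k → p (m+1) (y i) = B.δ (m+1) i b) →
    ∃ x : E.obj (m+2), p (m+2) x = b ∧ ∀ i ≤ m + 2, i ≠ k → E.δ (m+1) i x = y i)

/-- A levelwise map of `SData`s is simplicial if it commutes with all faces and
degeneracies (in the valid range). -/
def IsSimplicialMap (X Y : SData.{u}) (f : ∀ n, X.obj n → Y.obj n) : Prop :=
  (∀ (n i : ℕ), i ≤ n + 1 → ∀ x : X.obj (n+1), f n (X.δ n i x) = Y.δ n i (f (n+1) x)) ∧
  (∀ (n i : ℕ), i ≤ n → ∀ x : X.obj n, f (n+1) (X.σ n i x) = Y.σ n i (f n x))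

/-! ### `G`-simplicial sets and the orbit category -/

/-- The subconjugacy relation `g⁻¹Hg ⊆ K`, which determines the morphism
`ĝ : G/H → G/K` of the orbit category `O_G`. -/
def SubConj {G : Type v} [Group G] (g : G) (H K : Subgroup G) : Prop :=
  ∀ h ∈ H, g⁻¹ * h * g ∈ K

lemma SubConj.one {G : Type v} [Group G] (H : Subgroup G) : SubConj (1 : G) H H := by
  intro h hh; simpa using hh

lemma SubConj.comp {G : Type v} [Group G] {g k : G} {H K L : Subgroup G}
    (hg : SubConj g H K) (hk : SubConj k K L) : SubConj (g * k) H L := by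
  intro h hh
  have h2 := hk _ (hg h hh)
  rwa [show (g * k)⁻¹ * h * (g * k) = k⁻¹ * (g⁻¹ * h * g) * k by group]

/-- A `G`-simplicial set: a simplicial set together with a simplicial `G`-action. -/
structure GSData (G : Type u) [Group G] : Type (u+1) where
  X : SData.{u}
  simp : X.IsSimplicial
  act : ∀ n, G → X.obj n → X.obj n
  one_act : ∀ (n : ℕ) (x : X.obj n), act n 1 x = x
  mul_act : ∀ (n : ℕ) (g h : G) (x : X.obj n), act n (g * h) x = act n g (act n h x)
  act_δ : ∀ (n i : ℕ) (g : G) (x : X.obj (n+1)), X.δ n i (act (n+1) g x) = act n g (X.δ n i x)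
  act_σ : ∀ (n i : ℕ) (g : G) (x : X.obj n), X.σ n i (act n g x) = act (n+1) g (X.σ n i x)

namespace GSData

variable {G : Type u} [Group G]

/-- The fixed point subcomplex `X^H`. -/
def Fixed (Y : GSData G) (H : Subgroup G) : SData.{u} where
  obj n := {x : Y.X.obj n // ∀ h ∈ H, Y.act n h x = x}
  δ n i x := ⟨Y.X.δ n i x.1, fun h hh => by rw [← Y.act_δ, x.2 h hh]⟩
  σ n i x := ⟨Y.X.σ n i x.1, fun h hh => by rw [← Y.act_σ, x.2 h hh]⟩

/-- The simplicial map `X^K → X^H`, `x ↦ gx`, induced by a subconjugacy relation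
`g⁻¹Hg ⊆ K` (i.e. by the morphism `ĝ : G/H → G/K` of `O_G`). -/
def fmap (Y : GSData G) {H K : Subgroup G} (g : G) (hg : SubConj g H K) (n : ℕ) :
    (Y.Fixed K).obj n → (Y.Fixed H).obj n := fun x =>
  ⟨Y.act n g x.1, fun h hh => by
    rw [← Y.mul_act, show h * g = g * (g⁻¹ * h * g) by group, Y.mul_act,
      x.2 _ (hg h hh)]⟩

end GSData

/-- A (contravariant) `O_G`-group: `G/H ↦ π(G/H)`, with a map `π(G/K) → π(G/H)` for
every subconjugacy relation `g⁻¹Hg ⊆ K`. -/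
structure OGGrp (G : Type u) [Group G] : Type (u+1) where
  obj : Subgroup G → Type u
  grp : ∀ H, Group (obj H)
  map : ∀ (H K : Subgroup G) (g : G), SubConj g H K → obj K → obj H

attribute [instance] OGGrp.grp

/-- An abelian `O_G`-group. -/
structure OGAb (G : Type u) [Group G] : Type (u+1) where
  obj : Subgroup G → Type u
  ab : ∀ H, AddCommGroup (obj H)
  map : ∀ (H K : Subgroup G) (g : G), SubConj g H K → obj K → obj H

attribute [instance] OGAb.ab

/-! ### Equivariant twisted Cartan cohomology theories -/

/-- The data of an equivariant (twisted) Cartan cohomology theory: a sequence of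
simplicial abelian `O_G`-groups `Aⁱ` with simplicial differentials `δⁱ : Aⁱ → Aⁱ⁺¹`,
graded products, structure maps for the orbit category, and automorphism lifts `ψ`.
(`A i H` is the simplicial abelian group `Aⁱ(G/H)`.) -/
structure CartanPre (G : Type u) [Group G] : Type (u+1) where
  A : ℕ → Subgroup G → SData.{u}
  ab : ∀ i H n, AddCommGroup ((A i H).obj n)
  d : ∀ i H n, (A i H).obj n → (A (i+1) H).obj n
  map : ∀ (i : ℕ) (H K : Subgroup G) (g : G), SubConj g H K →
    ∀ n, (A i K).obj n → (A i H).obj n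
  mul : ∀ (i j : ℕ) (H : Subgroup G) (n : ℕ),
    (A i H).obj n → (A j H).obj n → (A (i+j) H).obj n
  ψ : ∀ (i : ℕ) (H : Subgroup G),
    ({m : (A 0 H).obj 0 // d 0 H 0 m = 0} → {m : (A 0 H).obj 0 // d 0 H 0 m = 0}) →
    ∀ n, (A i H).obj n → (A i H).obj n

attribute [instance] CartanPre.ab

namespace CartanPre

variable {G : Type u} [Group G]

/-- `M = (Z⁰𝒜)₀(G/H)`: the degree-`0` part of the kernel of `δ⁰`. -/
def M (C : CartanPre G) (H : Subgroup G) : Type u :=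
  {m : (C.A 0 H).obj 0 // C.d 0 H 0 m = 0}

/-- Transport along an equality of cohomological degrees. -/
def castA (C : CartanPre G) {H : Subgroup G} {n : ℕ} {i i' : ℕ} (h : i = i')
    (x : (C.A i H).obj n) : (C.A i' H).obj n := h ▸ x

/-- Additivity of a self-map of `M(G/H)` (expressed on underlying elements, so that no
group structure on the subtype is pre-supposed). -/
def AddCompat (C : CartanPre G) {H : Subgroup G} (α : C.M H → C.M H) : Prop :=
  ∀ x y z : C.M H, z.1 = x.1 + y.1 → (α z).1 = (α x).1 + (α y).1

/-- Being an automorphism of the abelian group `M(G/H)`. -/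
def IsAutM (C : CartanPre G) {H : Subgroup G} (α : C.M H → C.M H) : Prop :=
  Function.Bijective α ∧ C.AddCompat α

end CartanPre

/-- The axioms of an equivariant twisted Cartan cohomology theory (Definition 4.1):
each `𝒜(G/H)` is a simplicial differential graded algebra over `ℤ`, each degreewise
complex is exact in abelian `O_G`-groups, all homotopy groups of each `Aⁱ` vanish,
`Z⁰𝒜 = ker δ⁰` is simplicially trivial, and there are compatible automorphism lifts
`ψ_H : Aut((Z⁰𝒜)₀(G/H)) → Aut_{SG}(Aⁱ(G/H))`. -/
structure IsCartan {G : Type u} [Group G] (C : CartanPre G) : Prop where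
  simp : ∀ i H, (C.A i H).IsSimplicial
  δ_add : ∀ i H n j (x y : (C.A i H).obj (n+1)),
    (C.A i H).δ n j (x + y) = (C.A i H).δ n j x + (C.A i H).δ n j y
  σ_add : ∀ i H n j (x y : (C.A i H).obj n),
    (C.A i H).σ n j (x + y) = (C.A i H).σ n j x + (C.A i H).σ n j y
  d_add : ∀ i H n (x y : (C.A i H).obj n), C.d i H n (x + y) = C.d i H n x + C.d i H n y
  d_d : ∀ i H n (x : (C.A i H).obj n), C.d (i+1) H n (C.d i H n x) = 0
  d_δ : ∀ i H n j (x : (C.A i H).obj (n+1)),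
    C.d i H n ((C.A i H).δ n j x) = (C.A (i+1) H).δ n j (C.d i H (n+1) x)
  d_σ : ∀ i H n j (x : (C.A i H).obj n),
    C.d i H (n+1) ((C.A i H).σ n j x) = (C.A (i+1) H).σ n j (C.d i H n x)
  map_add : ∀ i (H K : Subgroup G) g (hg : SubConj g H K) n (x y : (C.A i K).obj n),
    C.map i H K g hg n (x + y) = C.map i H K g hg n x + C.map i H K g hg n y
  map_δ : ∀ i (H K : Subgroup G) g (hg : SubConj g H K) n j (x : (C.A i K).obj (n+1)),
    C.map i H K g hg n ((C.A i K).δ n j x) = (C.A i H).δ n j (C.map i H K g hg (n+1) x)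
  map_σ : ∀ i (H K : Subgroup G) g (hg : SubConj g H K) n j (x : (C.A i K).obj n),
    C.map i H K g hg (n+1) ((C.A i K).σ n j x) = (C.A i H).σ n j (C.map i H K g hg n x)
  map_d : ∀ i (H K : Subgroup G) g (hg : SubConj g H K) n (x : (C.A i K).obj n),
    C.map (i+1) H K g hg n (C.d i K n x) = C.d i H n (C.map i H K g hg n x)
  map_id : ∀ i (H : Subgroup G) n (x : (C.A i H).obj n),
    C.map i H H 1 (SubConj.one H) n x = x
  map_comp : ∀ i (H K L : Subgroup G) g k (hg : SubConj g H K) (hk : SubConj k K L)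
    n (x : (C.A i L).obj n),
    C.map i H L (g*k) (hg.comp hk) n x = C.map i H K g hg n (C.map i K L k hk n x)
  map_coset : ∀ i (H K : Subgroup G) (g g' : G) (hg : SubConj g H K)
    (hg' : SubConj g' H K), g⁻¹ * g' ∈ K →
    ∀ n (x : (C.A i K).obj n), C.map i H K g hg n x = C.map i H K g' hg' n x
  -- exactness of each degreewise complex:
  exact' : ∀ i H n (x : (C.A (i+1) H).obj n),
    C.d (i+1) H n x = 0 → ∃ y : (C.A i H).obj n, C.d i H n y = x
  -- all homotopy groups of each `Aⁱ(G/H)` vanish: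
  pi0 : ∀ i H (x : (C.A i H).obj 0),
    ∃ y : (C.A i H).obj 1, (C.A i H).δ 0 0 y = x ∧ (C.A i H).δ 0 1 y = 0
  htpy : ∀ i H n (x : (C.A i H).obj (n+1)), (∀ j ≤ n+1, (C.A i H).δ n j x = 0) →
    ∃ y : (C.A i H).obj (n+2), (C.A i H).δ (n+1) 0 y = x ∧
      ∀ j, 1 ≤ j → j ≤ n+2 → (C.A i H).δ (n+1) j y = 0
  -- `Z⁰𝒜` is simplicially trivial:
  z0_δ_inj : ∀ H n j, j ≤ n+1 → ∀ x y : (C.A 0 H).obj (n+1),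
    C.d 0 H (n+1) x = 0 → C.d 0 H (n+1) y = 0 →
    (C.A 0 H).δ n j x = (C.A 0 H).δ n j y → x = y
  z0_δ_surj : ∀ H n j, j ≤ n+1 → ∀ z : (C.A 0 H).obj n, C.d 0 H n z = 0 →
    ∃ x : (C.A 0 H).obj (n+1), C.d 0 H (n+1) x = 0 ∧ (C.A 0 H).δ n j x = z
  z0_σ_inj : ∀ H n j, j ≤ n → ∀ x y : (C.A 0 H).obj n,
    C.d 0 H n x = 0 → C.d 0 H n y = 0 →
    (C.A 0 H).σ n j x = (C.A 0 H).σ n j y → x = y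
  z0_σ_surj : ∀ H n j, j ≤ n → ∀ z : (C.A 0 H).obj (n+1), C.d 0 H (n+1) z = 0 →
    ∃ x : (C.A 0 H).obj n, C.d 0 H n x = 0 ∧ (C.A 0 H).σ n j x = z
  -- the graded product makes each `𝒜(G/H)` a simplicial DGA over `ℤ`:
  mul_add_l : ∀ i j H n (a a' : (C.A i H).obj n) (b : (C.A j H).obj n),
    C.mul i j H n (a + a') b = C.mul i j H n a b + C.mul i j H n a' b
  mul_add_r : ∀ i j H n (a : (C.A i H).obj n) (b b' : (C.A j H).obj n),
    C.mul i j H n a (b + b') = C.mul i j H n a b + C.mul i j H n a b'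
  mul_assoc' : ∀ i j k H n (a : (C.A i H).obj n) (b : (C.A j H).obj n)
    (c : (C.A k H).obj n),
    C.mul (i+j) k H n (C.mul i j H n a b) c =
      C.castA (by omega) (C.mul i (j+k) H n a (C.mul j k H n b c))
  mul_δ : ∀ i j H n l (a : (C.A i H).obj (n+1)) (b : (C.A j H).obj (n+1)),
    (C.A (i+j) H).δ n l (C.mul i j H (n+1) a b) =
      C.mul i j H n ((C.A i H).δ n l a) ((C.A j H).δ n l b)
  mul_σ : ∀ i j H n l (a : (C.A i H).obj n) (b : (C.A j H).obj n),
    (C.A (i+j) H).σ n l (C.mul i j H n a b) =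
      C.mul i j H (n+1) ((C.A i H).σ n l a) ((C.A j H).σ n l b)
  leibniz : ∀ i j H n (a : (C.A i H).obj n) (b : (C.A j H).obj n),
    C.d (i+j) H n (C.mul i j H n a b) =
      C.castA (by omega) (C.mul (i+1) j H n (C.d i H n a) b) +
      ((-1 : ℤ)^i) • C.castA (by omega) (C.mul i (j+1) H n a (C.d j H n b))
  -- the automorphism lifts `ψ` (the fifth axiom):
  ψ_id : ∀ i H n (x : (C.A i H).obj n), C.ψ i H id n x = x
  ψ_comp : ∀ i H (α β : C.M H → C.M H), C.IsAutM α → C.IsAutM β →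
    ∀ n (x : (C.A i H).obj n), C.ψ i H (α ∘ β) n x = C.ψ i H α n (C.ψ i H β n x)
  ψ_add : ∀ i H (α : C.M H → C.M H), C.IsAutM α →
    ∀ n (x y : (C.A i H).obj n), C.ψ i H α n (x + y) = C.ψ i H α n x + C.ψ i H α n y
  ψ_bij : ∀ i H (α : C.M H → C.M H), C.IsAutM α → ∀ n, Function.Bijective (C.ψ i H α n)
  ψ_δ : ∀ i H (α : C.M H → C.M H), C.IsAutM α → ∀ n j (x : (C.A i H).obj (n+1)),
    C.ψ i H α n ((C.A i H).δ n j x) = (C.A i H).δ n j (C.ψ i H α (n+1) x)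
  ψ_σ : ∀ i H (α : C.M H → C.M H), C.IsAutM α → ∀ n j (x : (C.A i H).obj n),
    C.ψ i H α (n+1) ((C.A i H).σ n j x) = (C.A i H).σ n j (C.ψ i H α n x)
  ψ_d : ∀ i H (α : C.M H → C.M H), C.IsAutM α → ∀ n (x : (C.A i H).obj n),
    C.d i H n (C.ψ i H α n x) = C.ψ (i+1) H α n (C.d i H n x)
  ψ_nat : ∀ i (H K : Subgroup G) g (hg : SubConj g H K)
    (α : C.M H → C.M H) (β : C.M K → C.M K), C.IsAutM α → C.IsAutM β →
    (∀ (x : C.M K) (y : C.M H), y.1 = C.map 0 H K g hg 0 x.1 →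
      (α y).1 = C.map 0 H K g hg 0 (β x).1) →
    ∀ n (z : (C.A i K).obj n),
      C.ψ i H α n (C.map i H K g hg n z) = C.map i H K g hg n (C.ψ i K β n z)

section Lifts

variable {G : Type u} [Group G]

/-- The objectwise twisted cartesian product `Aⁱ ×_{τ(π̲)} W̄π̲` over `G/H`, where `π̲`
acts on `Aⁱ` via `ψ ∘ φ`. -/
def TCPA (C : CartanPre G) (π : OGGrp G)
    (φ : ∀ H : Subgroup G, π.obj H → C.M H → C.M H) (i : ℕ) (H : Subgroup G) :
    SData.{u} :=
  TCP (C.A i H) (Wbar (π.obj H)) (constS (π.obj H))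
    (fun q u a => C.ψ i H (φ H u) q a) (tauW (π.obj H))

/-- `A_φⁱ(X;τ)`: the property of being a lift of `θ(τ)` along
`p : Aⁱ ×_{τ(π̲)} W̄π̲ → W̄π̲`, natural in `G/H`. -/
def IsLift (C : CartanPre G) (Y : GSData G) (π : OGGrp G)
    (τ : ∀ (H : Subgroup G) q, (Y.Fixed H).obj (q+1) → π.obj H)
    (φ : ∀ H : Subgroup G, π.obj H → C.M H → C.M H) (i : ℕ)
    (f : ∀ (H : Subgroup G) q, (Y.Fixed H).obj q →
      ((C.A i H).obj q × (Wbar (π.obj H)).obj q)) : Prop :=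
  -- it is a lift of `θ(τ)`:
  (∀ (H : Subgroup G) q (x : (Y.Fixed H).obj q),
    (f H q x).2 = thetaF (Y.Fixed H) (π.obj H) (τ H) q x) ∧
  -- it is a simplicial map into the twisted cartesian product:
  (∀ (H : Subgroup G) q j, j ≤ q + 1 → ∀ x : (Y.Fixed H).obj (q+1),
    f H q ((Y.Fixed H).δ q j x) = (TCPA C π φ i H).δ q j (f H (q+1) x)) ∧
  (∀ (H : Subgroup G) q j, j ≤ q → ∀ x : (Y.Fixed H).obj q,
    f H (q+1) ((Y.Fixed H).σ q j x) = (TCPA C π φ i H).σ q j (f H q x)) ∧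
  -- it is natural in `G/H`:
  (∀ (H K : Subgroup G) (g : G) (hg : SubConj g H K) q (x : (Y.Fixed K).obj q),
    f H q (Y.fmap g hg q x) =
      (C.map i H K g hg q (f K q x).1, fun j => π.map H K g hg ((f K q x).2 j)))

/-- Fibrewise addition of lifts. -/
def addF (C : CartanPre G) (Y : GSData G) (π : OGGrp G) (i : ℕ)
    (f f' : ∀ (H : Subgroup G) q, (Y.Fixed H).obj q →
      ((C.A i H).obj q × (Wbar (π.obj H)).obj q)) :
    ∀ (H : Subgroup G) q, (Y.Fixed H).obj q →
      ((C.A i H).obj q × (Wbar (π.obj H)).obj q) :=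
  fun H q x => ((f H q x).1 + (f' H q x).1, (f H q x).2)

/-- Fibrewise negation of lifts. -/
def negF (C : CartanPre G) (Y : GSData G) (π : OGGrp G) (i : ℕ)
    (f : ∀ (H : Subgroup G) q, (Y.Fixed H).obj q →
      ((C.A i H).obj q × (Wbar (π.obj H)).obj q)) :
    ∀ (H : Subgroup G) q, (Y.Fixed H).obj q →
      ((C.A i H).obj q × (Wbar (π.obj H)).obj q) :=
  fun H q x => (-(f H q x).1, (f H q x).2)

/-- The trivial (zero) lift. -/
def zeroF (C : CartanPre G) (Y : GSData G) (π : OGGrp G)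
    (τ : ∀ (H : Subgroup G) q, (Y.Fixed H).obj (q+1) → π.obj H) (i : ℕ) :
    ∀ (H : Subgroup G) q, (Y.Fixed H).obj q →
      ((C.A i H).obj q × (Wbar (π.obj H)).obj q) :=
  fun H q x => (0, thetaF (Y.Fixed H) (π.obj H) (τ H) q x)

/-- The differential `δ̄` on lifts, induced by `δⁱ` on the first coordinate. -/
def dF (C : CartanPre G) (Y : GSData G) (π : OGGrp G) (i : ℕ)
    (f : ∀ (H : Subgroup G) q, (Y.Fixed H).obj q →
      ((C.A i H).obj q × (Wbar (π.obj H)).obj q)) :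
    ∀ (H : Subgroup G) q, (Y.Fixed H).obj q →
      ((C.A (i+1) H).obj q × (Wbar (π.obj H)).obj q) :=
  fun H q x => (C.d i H q (f H q x).1, (f H q x).2)

end Lifts

/-- The product `X × Δ[1]` of a simplicial set with the standard `1`-simplex
(`Δ[1]_q` = monotone maps `Fin (q+1) → Fin 2`). -/
def prodD1 (X : SData.{u}) : SData.{u} where
  obj q := X.obj q × (Fin (q+1) →o Fin 2)
  δ q j p :=
    (X.δ q j p.1,
     ⟨fun t => p.2 ((⟨min j (q+1), by omega⟩ : Fin (q+2)).succAbove t),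
      fun a b h => p.2.mono ((Fin.strictMono_succAbove _).monotone h)⟩)
  σ q j p :=
    (X.σ q j p.1,
     ⟨fun t => p.2 ((⟨min j q, by omega⟩ : Fin (q+1)).predAbove t),
      fun a b h => p.2.mono (Fin.predAbove_right_monotone _ h)⟩)

/-- The constant vertex `ε` of `Δ[1]`, as a `q`-simplex. -/
def constD1 (q : ℕ) (ε : Fin 2) : Fin (q+1) →o Fin 2 := ⟨fun _ => ε, monotone_const⟩

/-- Let `𝒜` be an equivariant twisted Cartan cohomology theory, `X` a
`G`-simplicial set, `τ : ΦX → π̲` an `O_G`-twisting function and `φ` a `π̲`-module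
structure on `M = (Z⁰𝒜)₀`.  Then `H⁰` of the complex `(A_φ^*(X;τ), δ̄)` equals the set
of lifts of `θ(τ)` to `Z⁰𝒜 ×_{τ(π̲)} W̄π̲` (i.e. `δ̄⁰f = 0` iff `f` takes values in
`Z⁰𝒜`), and in degree `0` two such lifts are vertically homotopic iff they are equal. -/
theorem degree_zero_lifts {G : Type u} [Group G]
    (C : CartanPre G) (hC : IsCartan C) (Y : GSData G) (π : OGGrp G)
    (τ : ∀ (H : Subgroup G) q, (Y.Fixed H).obj (q+1) → π.obj H)
    (hτ : ∀ H : Subgroup G,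
      @IsTwisting (Y.Fixed H) (constS (π.obj H))
        (fun _ => inferInstanceAs (Group (π.obj H))) (τ H))
    (hτnat : ∀ (H K : Subgroup G) (g : G) (hg : SubConj g H K) q
      (x : (Y.Fixed K).obj (q+1)),
      τ H q (Y.fmap g hg (q+1) x) = π.map H K g hg (τ K q x))
    (φ : ∀ H : Subgroup G, π.obj H → C.M H → C.M H)
    (hφ_one : ∀ H m, φ H 1 m = m)
    (hφ_mul : ∀ H u v m, φ H (u * v) m = φ H u (φ H v m))
    (hφ_aut : ∀ H u, C.IsAutM (φ H u)) :
    -- `H⁰ = ker δ̄⁰` consists exactly of the lifts with values in `Z⁰𝒜`: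
    (∀ f, IsLift C Y π τ φ 0 f →
      (dF C Y π 0 f = zeroF C Y π τ 1 ↔
        ∀ (H : Subgroup G) q (x : (Y.Fixed H).obj q), C.d 0 H q (f H q x).1 = 0)) ∧
    -- rigidity: two vertically homotopic lifts into `Z⁰𝒜 ×_{τ(π̲)} W̄π̲` are equal:
    (∀ f g, IsLift C Y π τ φ 0 f → IsLift C Y π τ φ 0 g →
      (∀ (H : Subgroup G) q (x : (Y.Fixed H).obj q), C.d 0 H q (f H q x).1 = 0) →
      (∀ (H : Subgroup G) q (x : (Y.Fixed H).obj q), C.d 0 H q (g H q x).1 = 0) →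
      ∀ F : ∀ (H : Subgroup G) q,
        (prodD1 (Y.Fixed H)).obj q → ((C.A 0 H).obj q × (Wbar (π.obj H)).obj q),
      -- `F` is a vertical homotopy through `Z⁰𝒜 ×_{τ(π̲)} W̄π̲` from `f` to `g`:
      (∀ (H : Subgroup G) q (p : (prodD1 (Y.Fixed H)).obj q),
        C.d 0 H q (F H q p).1 = 0) →
      (∀ (H : Subgroup G) q (p : (prodD1 (Y.Fixed H)).obj q),
        (F H q p).2 = thetaF (Y.Fixed H) (π.obj H) (τ H) q p.1) →
      (∀ (H : Subgroup G) q j, j ≤ q + 1 → ∀ p : (prodD1 (Y.Fixed H)).obj (q+1),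
        F H q ((prodD1 (Y.Fixed H)).δ q j p) = (TCPA C π φ 0 H).δ q j (F H (q+1) p)) →
      (∀ (H : Subgroup G) q j, j ≤ q → ∀ p : (prodD1 (Y.Fixed H)).obj q,
        F H (q+1) ((prodD1 (Y.Fixed H)).σ q j p) = (TCPA C π φ 0 H).σ q j (F H q p)) →
      (∀ (H K : Subgroup G) (g' : G) (hg : SubConj g' H K) q
          (p : (prodD1 (Y.Fixed K)).obj q),
        F H q (Y.fmap g' hg q p.1, p.2) =
          (C.map 0 H K g' hg q (F K q p).1, fun j => π.map H K g' hg ((F K q p).2 j))) →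
      (∀ (H : Subgroup G) q (x : (Y.Fixed H).obj q),
        F H q (x, constD1 q 0) = f H q x) →
      (∀ (H : Subgroup G) q (x : (Y.Fixed H).obj q),
        F H q (x, constD1 q 1) = g H q x) →
      f = g) := by
  constructor
  · intro f hf
    constructor
    · intro h H q x
      exact congrArg Prod.fst (congrFun (congrFun (congrFun h H) q) x)
    · intro h
      funext H q x
      refine Prod.ext (h H q x) ?_
      show (f H q x).2 = thetaF (Y.Fixed H) (π.obj H) (τ H) q x
      exact hf.1 H q x
  · intro f g hf hg hf0 hg0 F hF0 hFθ hFδ _hFσ _hFnat hFf hFg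
    -- base case: degree 0
    have base : ∀ (H : Subgroup G) (x : (Y.Fixed H).obj 0), f H 0 x = g H 0 x := by
      intro H x
      set p : (prodD1 (Y.Fixed H)).obj 1 :=
        ((Y.Fixed H).σ 0 0 x, (OrderHom.id : Fin 2 →o Fin 2)) with hp
      have hδ0 : (prodD1 (Y.Fixed H)).δ 0 0 p = (x, constD1 0 1) := by
        refine Prod.ext ?_ ?_
        · exact Subtype.ext (Y.simp.δσ_self 0 0 (le_refl 0) x.1)
        · refine DFunLike.ext _ _ fun t => ?_
          have ht : t = 0 := by omega
          subst ht
          rfl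
      have hδ1 : (prodD1 (Y.Fixed H)).δ 0 1 p = (x, constD1 0 0) := by
        refine Prod.ext ?_ ?_
        · exact Subtype.ext (Y.simp.δσ_succ 0 0 (le_refl 0) x.1)
        · refine DFunLike.ext _ _ fun t => ?_
          have ht : t = 0 := by omega
          subst ht
          rfl
      have e0 := hFδ H 0 0 (by omega) p
      have e1 := hFδ H 0 1 (by omega) p
      rw [hδ0, hFg H 0 x] at e0
      rw [hδ1, hFf H 0 x] at e1
      -- the first coordinate of `F H 1 p` lies in `Z⁰`, hence is degenerate
      obtain ⟨b, hb0, hba⟩ := hC.z0_σ_surj H 0 0 (le_refl 0) (F H 1 p).1 (hF0 H 1 p)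
      -- the twisting element is trivial
      have hu : tauW (π.obj H) 0 (F H 1 p).2 = 1 := by
        show (F H 1 p).2 0 = 1
        rw [hFθ H 1 p]
        exact (hτ H).s0 0 x
      have hφ1 : φ H (1 : π.obj H) = id := funext (hφ_one H)
      have hδ0a : (C.A 0 H).δ 0 0 (F H 1 p).1 = b := by
        rw [← hba]; exact (hC.simp 0 H).δσ_self 0 0 (le_refl 0) b
      have hδ1a : (C.A 0 H).δ 0 1 (F H 1 p).1 = b := by
        rw [← hba]; exact (hC.simp 0 H).δσ_succ 0 0 (le_refl 0) b
      have hg1 : (g H 0 x).1 = b := by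
        have := congrArg Prod.fst e0
        rw [this]
        show C.ψ 0 H (φ H (tauW (π.obj H) 0 (F H 1 p).2)) 0
            ((C.A 0 H).δ 0 0 (F H 1 p).1) = b
        rw [hu, hφ1]; exact (hC.ψ_id 0 H 0 _).trans hδ0a
      have hf1 : (f H 0 x).1 = b := by
        have := congrArg Prod.fst e1
        rw [this]
        show (C.A 0 H).δ 0 1 (F H 1 p).1 = b
        exact hδ1a
      refine Prod.ext (hf1.trans hg1.symm) ?_
      exact (hf.1 H 0 x).trans (hg.1 H 0 x).symm
    -- inductive step using rigidity of `Z⁰`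
    have main : ∀ q (H : Subgroup G) (x : (Y.Fixed H).obj q), f H q x = g H q x := by
      intro q
      induction q with
      | zero => exact base
      | succ n ih =>
        intro H x
        refine Prod.ext ?_ ((hf.1 H (n+1) x).trans (hg.1 H (n+1) x).symm)
        have ef := congrArg Prod.fst (hf.2.1 H n 1 (by omega) x)
        have eg := congrArg Prod.fst (hg.2.1 H n 1 (by omega) x)
        have hef : (f H n ((Y.Fixed H).δ n 1 x)).1 = (C.A 0 H).δ n 1 (f H (n+1) x).1 := ef
        have heg : (g H n ((Y.Fixed H).δ n 1 x)).1 = (C.A 0 H).δ n 1 (g H (n+1) x).1 := eg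
        have h1 : (C.A 0 H).δ n 1 (f H (n+1) x).1 = (C.A 0 H).δ n 1 (g H (n+1) x).1 := by
          rw [← hef, ← heg, ih H ((Y.Fixed H).δ n 1 x)]
        exact hC.z0_δ_inj H n 1 (by omega) _ _ (hf0 H (n+1) x) (hg0 H (n+1) x) h1
    funext H q x
    exact main q H x
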